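/- Let p be a prime and K a finite Galois extension of ℚ_p, equipped with the unique absolute value ‖·‖ extending the p-adic absolute value of ℚ_p. Let α, β ∈ K satisfy ‖α − 1‖ < 1 and ‖β − 1‖ < 1, suppose α is not a root of unity, and suppose α and β are conjugate over ℚ_p, i.e., σ(α) = β for some σ ∈ Gal(K/ℚ_p). Let w ∈ ℤ_p^× be such that for every sequence (a_j) of natural numbers converging to w in ℤ_p, the sequence α^{a_j} converges to β in K (so that β = α^w). Then w is a root of unity in ℤ_p: w^m = 1 for some integer m ≥ 1 (indeed m = [K : ℚ_p] works). -/

import Mathlib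

open Filter Topology

section AuxUltra
open IsUltrametricDist
variable {K : Type} [NormedField K]

omit [NormedField K] in
private lemma aux_dummy : True := trivial

lemma aux_pow_norm_le {x : K} (hx : ‖x‖ ≤ 1) (n : ℕ) : ‖x ^ n‖ ≤ 1 := by
  rw [norm_pow]; exact pow_le_one₀ (norm_nonneg x) hx

variable [IsUltrametricDist K]

lemma aux_pow_lip {x y : K} (hx : ‖x‖ ≤ 1) (hy : ‖y‖ ≤ 1) (n : ℕ) :
    ‖x ^ n - y ^ n‖ ≤ ‖x - y‖ := by
  induction n with
  | zero => simp
  | succ n ih =>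
    have hxy : x ^ (n+1) - y ^ (n+1) = x ^ n * (x - y) + (x ^ n - y ^ n) * y := by ring
    rw [hxy]
    refine (norm_add_le_max _ _).trans (max_le ?_ ?_)
    · rw [norm_mul]
      calc ‖x ^ n‖ * ‖x - y‖ ≤ 1 * ‖x - y‖ := by gcongr; exact aux_pow_norm_le hx n
        _ = ‖x - y‖ := one_mul _
    · rw [norm_mul]
      calc ‖x ^ n - y ^ n‖ * ‖y‖ ≤ ‖x - y‖ * 1 := by gcongr
        _ = ‖x - y‖ := mul_one _

lemma aux_pow_sub_one {x : K} (hx : ‖x‖ ≤ 1) (n : ℕ) : ‖x ^ n - 1‖ ≤ ‖x - 1‖ := by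
  simpa using aux_pow_lip hx (le_of_eq norm_one) n

lemma aux_pow_q {x : K} (hx : ‖x‖ ≤ 1) (q : ℕ) :
    ‖x ^ q - 1‖ ≤ max ‖(q : K)‖ ‖x - 1‖ * ‖x - 1‖ := by
  have hgs : (∑ i ∈ Finset.range q, x ^ i) * (x - 1) = x ^ q - 1 := geom_sum_mul x q
  rw [← hgs, norm_mul]
  refine mul_le_mul_of_nonneg_right ?_ (norm_nonneg _)
  have hsplit : (∑ i ∈ Finset.range q, x ^ i) = (∑ i ∈ Finset.range q, (x ^ i - 1)) + (q : K) := by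
    rw [Finset.sum_sub_distrib]
    simp
  rw [hsplit]
  refine (norm_add_le_max _ _).trans (max_le ?_ (le_max_left _ _))
  refine le_trans ?_ (le_max_right _ _)
  exact norm_sum_le_of_forall_le_of_nonneg (norm_nonneg _) fun i _ => aux_pow_sub_one hx i

lemma aux_pow_qn {x : K} (hx : ‖x‖ ≤ 1) (hx1 : ‖x - 1‖ < 1) {q : ℕ} (hq : ‖(q : K)‖ < 1) (n : ℕ) :
    ‖x ^ q ^ n - 1‖ ≤ max ‖(q : K)‖ ‖x - 1‖ ^ n * ‖x - 1‖ := by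
  induction n with
  | zero => simp
  | succ n ih =>
    have hs1 : max ‖(q : K)‖ ‖x - 1‖ ≤ 1 := max_le hq.le hx1.le
    have h1 : ‖x ^ q ^ n - 1‖ ≤ ‖x - 1‖ := by
      refine ih.trans ?_
      calc max ‖(q : K)‖ ‖x - 1‖ ^ n * ‖x - 1‖ ≤ 1 * ‖x - 1‖ := by
            gcongr; exact pow_le_one₀ (le_max_of_le_right (norm_nonneg _)) hs1
        _ = ‖x - 1‖ := one_mul _
    have h2 : ‖(x ^ q ^ n) ^ q - 1‖ ≤ max ‖(q : K)‖ ‖x ^ q ^ n - 1‖ * ‖x ^ q ^ n - 1‖ :=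
      aux_pow_q (aux_pow_norm_le hx _) q
    have h3 : x ^ q ^ (n + 1) = (x ^ q ^ n) ^ q := by rw [← pow_mul, pow_succ]
    rw [h3]
    refine h2.trans ?_
    calc max ‖(q : K)‖ ‖x ^ q ^ n - 1‖ * ‖x ^ q ^ n - 1‖
        ≤ max ‖(q : K)‖ ‖x - 1‖ * (max ‖(q : K)‖ ‖x - 1‖ ^ n * ‖x - 1‖) :=
          mul_le_mul (max_le (le_max_left _ _) (le_max_of_le_right h1)) ih (norm_nonneg _)
            (le_max_of_le_left (norm_nonneg _))
      _ = max ‖(q : K)‖ ‖x - 1‖ ^ (n + 1) * ‖x - 1‖ := by ring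

end AuxUltra

lemma aux_appr_tendsto (p : ℕ) [Fact p.Prime] (x : ℤ_[p]) :
    Tendsto (fun j => ((x.appr j : ℤ_[p]))) atTop (𝓝 x) := by
  rw [tendsto_iff_norm_sub_tendsto_zero]
  have hb : ∀ j : ℕ, ‖(x.appr j : ℤ_[p]) - x‖ ≤ ((p:ℝ)⁻¹) ^ j := by
    intro j
    rw [norm_sub_rev]
    have := (PadicInt.norm_le_pow_iff_mem_span_pow (x - (x.appr j : ℤ_[p])) j).2
      (PadicInt.appr_spec j x)
    rwa [zpow_neg, zpow_natCast, ← inv_pow] at this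
  refine squeeze_zero (fun j => norm_nonneg _) hb ?_
  refine tendsto_pow_atTop_nhds_zero_of_lt_one (by positivity) ?_
  rw [inv_lt_one_iff₀]
  right
  exact_mod_cast (Fact.out : p.Prime).one_lt

theorem stmt_2 (p : ℕ) [Fact p.Prime] (K : Type) [NormedField K]
    [Algebra ℚ_[p] K] [FiniteDimensional ℚ_[p] K] [IsGalois ℚ_[p] K]
    (hext : ∀ x : ℚ_[p], ‖algebraMap ℚ_[p] K x‖ = ‖x‖)
    (α β : K) (hα : ‖α - 1‖ < 1) (hβ : ‖β - 1‖ < 1)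
    (hαru : ∀ m : ℕ, 1 ≤ m → α ^ m ≠ 1)
    (σ : K ≃ₐ[ℚ_[p]] K) (hσ : σ α = β)
    (w : ℤ_[p]ˣ)
    (hw : ∀ a : ℕ → ℕ,
      Tendsto (fun j => ((a j : ℤ_[p]))) atTop (𝓝 (w : ℤ_[p])) →
      Tendsto (fun j => α ^ (a j)) atTop (𝓝 β)) :
    ∃ m : ℕ, 1 ≤ m ∧ (w : ℤ_[p]) ^ m = 1 ∧ m = Module.finrank ℚ_[p] K := by
  have hp1 : (1:ℝ) < p := by exact_mod_cast (Fact.out : p.Prime).one_lt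
  -- K is nonarchimedean
  haveI : IsUltrametricDist K := by
    refine IsUltrametricDist.isUltrametricDist_of_forall_norm_natCast_le_one fun n => ?_
    rw [← map_natCast (algebraMap ℚ_[p] K) n, hext]
    exact_mod_cast Padic.norm_int_le_one (n : ℤ)
  letI : NormedSpace ℚ_[p] K := ⟨fun c x => by rw [Algebra.smul_def, norm_mul, hext]⟩
  -- basic norms
  have hα1 : ‖α‖ = 1 := by
    have h1 : ‖α‖ ≤ 1 := by
      have := IsUltrametricDist.norm_add_le_max (α - 1) 1
      simpa using this.trans (max_le hα.le norm_one.le)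
    have h2 : (1:ℝ) ≤ ‖α‖ := by
      by_contra h
      push_neg at h
      have h3 := IsUltrametricDist.norm_add_le_max α (1 - α)
      rw [add_sub_cancel] at h3
      have h4 : ‖(1:K)‖ ≤ max ‖α‖ ‖1 - α‖ := h3
      rw [norm_one, norm_sub_rev] at h4
      exact absurd (h4.trans_lt (max_lt h hα)) (lt_irrefl 1)
    linarith
  have hαpow1 : ∀ n : ℕ, ‖α ^ n‖ = 1 := fun n => by rw [norm_pow, hα1, one_pow]
  have hpK : ‖(p : K)‖ < 1 := by
    rw [← map_natCast (algebraMap ℚ_[p] K) p, hext]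
    rw [Padic.norm_p]
    rw [inv_lt_one_iff₀]
    right
    exact hp1
  have hs : max ‖(p:K)‖ ‖α - 1‖ < 1 := max_lt hpK hα
  have hs0 : (0:ℝ) ≤ max ‖(p:K)‖ ‖α - 1‖ := le_max_of_le_left (norm_nonneg _)
  -- continuity in the exponent
  have hexp : ∀ (n m : ℕ → ℕ) (t : ℤ_[p]),
      Tendsto (fun j => ((n j : ℤ_[p]))) atTop (𝓝 t) →
      Tendsto (fun j => ((m j : ℤ_[p]))) atTop (𝓝 t) →
      Tendsto (fun j => α ^ n j - α ^ m j) atTop (𝓝 0) := by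
    intro n m t hn hm
    rw [NormedAddCommGroup.tendsto_nhds_zero]
    intro ε hε
    obtain ⟨N, hN⟩ : ∃ N : ℕ, max ‖(p:K)‖ ‖α - 1‖ ^ N * ‖α - 1‖ < ε := by
      have h1 := (tendsto_pow_atTop_nhds_zero_of_lt_one hs0 hs).mul_const ‖α - 1‖
      rw [zero_mul] at h1
      have h2 := (h1.eventually (eventually_lt_nhds hε)).exists
      exact h2
    have key : ∀ n' m' : ℕ, m' ≤ n' → ((p:ℤ))^N ∣ ((n' : ℤ) - m') → ‖α ^ n' - α ^ m'‖ < ε := by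
      intro n' m' hle hdvd
      obtain ⟨k, hk⟩ : p ^ N ∣ (n' - m') := by
        have h3 : ((p:ℤ))^N ∣ ((n' - m' : ℕ) : ℤ) := by
          rwa [Nat.cast_sub hle]
        exact_mod_cast h3
      have hsplit : α ^ n' - α ^ m' = α ^ m' * ((α ^ p ^ N) ^ k - 1) := by
        rw [mul_sub, mul_one, ← pow_mul, ← pow_add, ← hk, Nat.add_sub_cancel' hle]
      calc ‖α ^ n' - α ^ m'‖ = ‖α ^ m'‖ * ‖(α ^ p ^ N) ^ k - 1‖ := by rw [hsplit, norm_mul]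
        _ = ‖(α ^ p ^ N) ^ k - 1‖ := by rw [hαpow1, one_mul]
        _ ≤ ‖α ^ p ^ N - 1‖ := aux_pow_sub_one (aux_pow_norm_le hα1.le _) k
        _ ≤ max ‖(p:K)‖ ‖α - 1‖ ^ N * ‖α - 1‖ := aux_pow_qn hα1.le hα hpK N
        _ < ε := hN
    have hd : Tendsto (fun j => ((n j : ℤ_[p])) - (m j : ℤ_[p])) atTop (𝓝 0) := by
      simpa using hn.sub hm
    have hpos : 0 < (p:ℝ) ^ (-(N:ℤ)) := by positivity
    have hev : ∀ᶠ j in atTop, ‖((n j : ℤ_[p])) - (m j : ℤ_[p])‖ ≤ (p:ℝ) ^ (-(N:ℤ)) := by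
      filter_upwards [Metric.tendsto_nhds.mp hd _ hpos] with j hj
      rw [dist_zero_right] at hj
      exact hj.le
    filter_upwards [hev] with j hj
    have hdvd : ((p:ℤ))^N ∣ ((n j : ℤ) - (m j : ℤ)) := by
      rw [← PadicInt.norm_int_le_pow_iff_dvd]
      push_cast
      exact hj
    rcases le_total (m j) (n j) with h | h
    · exact key _ _ h hdvd
    · rw [norm_sub_rev]
      exact key _ _ h (dvd_sub_comm.mp hdvd)
  -- the approximating sequence
  set a : ℕ → ℕ := fun j => (w : ℤ_[p]).appr j with ha_def
  have ha : Tendsto (fun j => ((a j : ℤ_[p]))) atTop (𝓝 (w : ℤ_[p])) := aux_appr_tendsto p _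
  have hαβ : Tendsto (fun j => α ^ (a j)) atTop (𝓝 β) := hw a ha
  -- iterates of σ
  have hcontk : ∀ k : ℕ, Continuous fun x : K => (σ ^ k) x := fun k =>
    (σ ^ k).toLinearMap.continuous_of_finiteDimensional
  have hk : ∀ k : ℕ, Tendsto (fun j => α ^ (a j ^ k)) atTop (𝓝 ((σ ^ k) α)) := by
    intro k
    induction k with
    | zero => simpa using tendsto_const_nhds
    | succ k ih =>
      set γ := (σ ^ k) α with hγ
      have hγ1 : ‖γ‖ ≤ 1 := by
        have h1 : Tendsto (fun j => ‖α ^ (a j ^ k)‖) atTop (𝓝 ‖γ‖) := ih.norm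
        have h2 : Tendsto (fun j => ‖α ^ (a j ^ k)‖) atTop (𝓝 (1:ℝ)) := by
          simp only [hαpow1]
          exact tendsto_const_nhds
        rw [tendsto_nhds_unique h1 h2]
      have h1 : Tendsto (fun j => γ ^ (a j)) atTop (𝓝 ((σ ^ (k+1)) α)) := by
        have h2 : Tendsto (fun j => (σ ^ k) (α ^ (a j))) atTop (𝓝 ((σ ^ k) β)) :=
          ((hcontk k).tendsto β).comp hαβ
        have h3 : (fun j => (σ ^ k) (α ^ (a j))) = fun j => γ ^ (a j) := by
          funext j; rw [map_pow]
        have h4 : (σ ^ k) β = (σ ^ (k+1)) α := by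
          rw [← hσ, pow_succ, AlgEquiv.mul_apply]
        rwa [h3, h4] at h2
      have h5 : Tendsto (fun j => α ^ (a j ^ (k+1)) - γ ^ (a j)) atTop (𝓝 0) := by
        rw [tendsto_zero_iff_norm_tendsto_zero]
        refine squeeze_zero (fun j => norm_nonneg _) (g := fun j => ‖α ^ (a j ^ k) - γ‖) ?_ ?_
        · intro j
          have h6 : α ^ (a j ^ (k+1)) = (α ^ (a j ^ k)) ^ (a j) := by
            rw [← pow_mul, pow_succ]
          rw [h6]
          exact aux_pow_lip (aux_pow_norm_le hα1.le _) hγ1 (a j)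
        · have := ih.sub (tendsto_const_nhds (x := γ))
          rw [sub_self] at this
          simpa using this.norm
      have := h5.add h1
      rw [zero_add] at this
      simpa using this
  -- conclusion
  set m := Module.finrank ℚ_[p] K with hm_def
  have hm1 : 1 ≤ m := Module.finrank_pos
  have hσm : σ ^ m = 1 := by
    rw [hm_def, ← IsGalois.card_aut_eq_finrank]
    exact pow_card_eq_one'
  have hαα : Tendsto (fun j => α ^ (a j ^ m)) atTop (𝓝 α) := by
    have := hk m
    rwa [hσm, AlgEquiv.one_apply] at this
  refine ⟨m, hm1, ?_, rfl⟩
  by_contra hne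
  -- setup
  have ht : (w : ℤ_[p]) ^ m - 1 ≠ 0 := sub_ne_zero.mpr hne
  set t : ℤ_[p] := (w : ℤ_[p]) ^ m - 1 with ht_def
  set u : ℤ_[p]ˣ := PadicInt.unitCoeff ht with hu_def
  set v : ℕ := t.valuation with hv_def
  have htuv : t = (u : ℤ_[p]) * (p : ℤ_[p]) ^ v := PadicInt.unitCoeff_spec ht
  -- b j = a j ^ m, eventually ≥ 1
  have hb : Tendsto (fun j => ((a j ^ m : ℕ) : ℤ_[p])) atTop (𝓝 ((w : ℤ_[p]) ^ m)) := by
    have := ha.pow m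
    simpa using this
  have ha1 : ∀ j : ℕ, 1 ≤ j → 1 ≤ a j := by
    intro j hj
    by_contra h
    push_neg at h
    have h' : a j = 0 := by omega
    have h0 : (w : ℤ_[p]) - (a j : ℤ_[p]) ∈ Ideal.span {(p : ℤ_[p]) ^ j} :=
      PadicInt.appr_spec j (w : ℤ_[p])
    rw [h', Nat.cast_zero, sub_zero] at h0
    have h2 := (PadicInt.norm_le_pow_iff_mem_span_pow _ j).2 h0
    rw [PadicInt.norm_units] at h2
    have h3 : (p:ℝ) ^ (-(j:ℤ)) < 1 := by
      rw [zpow_neg, zpow_natCast, inv_lt_one_iff₀]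
      right
      exact one_lt_pow₀ hp1 (by omega)
    linarith
  have hb1 : ∀ j : ℕ, 1 ≤ j → 1 ≤ a j ^ m := fun j hj => Nat.one_le_pow _ _ (ha1 j hj)
  -- c j = a j ^ m - 1
  set c : ℕ → ℕ := fun j => a j ^ m - 1 with hc_def
  have hc : Tendsto (fun j => ((c j : ℤ_[p]))) atTop (𝓝 t) := by
    have h1 : Tendsto (fun j => ((a j ^ m : ℕ) : ℤ_[p]) - 1) atTop (𝓝 t) := by
      rw [ht_def]
      exact hb.sub tendsto_const_nhds
    refine h1.congr' ?_
    filter_upwards [eventually_ge_atTop 1] with j hj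
    rw [hc_def]
    push_cast [Nat.cast_sub (hb1 j hj)]
    ring
  have hαone : α ≠ 0 := by
    intro h
    rw [h] at hα1
    simp at hα1
  have hcα : Tendsto (fun j => α ^ (c j)) atTop (𝓝 1) := by
    have h1 : Tendsto (fun j => α ^ (a j ^ m) * α⁻¹) atTop (𝓝 1) := by
      have := hαα.mul_const α⁻¹
      rwa [mul_inv_cancel₀ hαone] at this
    refine h1.congr' ?_
    filter_upwards [eventually_ge_atTop 1] with j hj
    have h2 : a j ^ m = c j + 1 := by
      have h2' := hb1 j hj
      simp only [hc_def]
      omega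
    rw [h2, pow_succ, mul_assoc, mul_inv_cancel₀ hαone, mul_one]
  -- d j approximates u⁻¹
  set d : ℕ → ℕ := fun j => ((u⁻¹ : ℤ_[p]ˣ) : ℤ_[p]).appr j with hd_def
  have hd : Tendsto (fun j => ((d j : ℤ_[p]))) atTop (𝓝 ((u⁻¹ : ℤ_[p]ˣ) : ℤ_[p])) :=
    aux_appr_tendsto p _
  -- e j = c j * d j  →  p ^ v
  have he : Tendsto (fun j => ((c j * d j : ℕ) : ℤ_[p])) atTop (𝓝 ((p : ℤ_[p]) ^ v)) := by
    have h1 := hc.mul hd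
    have h2 : t * ((u⁻¹ : ℤ_[p]ˣ) : ℤ_[p]) = (p : ℤ_[p]) ^ v := by
      calc t * ((u⁻¹ : ℤ_[p]ˣ) : ℤ_[p])
          = (p : ℤ_[p]) ^ v * ((u : ℤ_[p]) * ((u⁻¹ : ℤ_[p]ˣ) : ℤ_[p])) := by rw [htuv]; ring
        _ = (p : ℤ_[p]) ^ v := by rw [Units.mul_inv, mul_one]
    rw [← h2]
    simpa using h1
  -- α ^ (c j * d j) → 1
  have h0 : Tendsto (fun j => ‖α ^ (c j) - 1‖) atTop (𝓝 0) := by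
    have h1 := hcα.sub (tendsto_const_nhds (x := (1:K)))
    rw [sub_self] at h1
    simpa using h1.norm
  have heα : Tendsto (fun j => α ^ (c j * d j)) atTop (𝓝 1) := by
    rw [tendsto_iff_norm_sub_tendsto_zero]
    refine squeeze_zero (fun j => norm_nonneg _) (g := fun j => ‖α ^ (c j) - 1‖) ?_ h0
    intro j
    rw [pow_mul]
    exact aux_pow_sub_one (aux_pow_norm_le hα1.le _) (d j)
  -- α ^ (c j * d j) → α ^ (p ^ v)
  have heα2 : Tendsto (fun j => α ^ (c j * d j)) atTop (𝓝 (α ^ (p ^ v))) := by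
    have h1 : Tendsto (fun _ : ℕ => (((p ^ v : ℕ) : ℤ_[p]))) atTop (𝓝 ((p : ℤ_[p]) ^ v)) := by
      have : (((p ^ v : ℕ) : ℤ_[p])) = (p : ℤ_[p]) ^ v := by push_cast; ring
      rw [this]
      exact tendsto_const_nhds
    have h2 := hexp (fun j => c j * d j) (fun _ => p ^ v) ((p : ℤ_[p]) ^ v) he h1
    have h3 := h2.add (tendsto_const_nhds (x := α ^ (p ^ v)))
    rw [zero_add] at h3
    simpa using h3
  have hfinal : α ^ (p ^ v) = 1 := (tendsto_nhds_unique heα2 heα)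
  exact hαru (p ^ v) (Nat.one_le_pow _ _ (Fact.out : p.Prime).pos) hfinal
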